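/- Let Y be a string with bp_{4K}(Y) > 10K. For s ∈ {−K,…,K} let Y_s = Y[K+s .. |Y|−K+s]. Then for all s, s' ∈ {−K,…,K}: ED(Y_s, Y_{s'}) = 2 · |s − s'|. -/

import Mathlib

/-- The substring of `X` with indices in `{i, ..., j-1}` (out-of-bounds indices clipped). -/
def listSub {α : Type*} (X : List α) (i j : ℕ) : List α := (X.take j).drop i

/-- Substring with possibly negative (integer) endpoints, clipped. -/
def listSubZ {α : Type*} (X : List α) (i j : ℤ) : List α := listSub X i.toNat j.toNat

/-- Costs for the Levenshtein distance (ported from the removed `Mathlib.Data.List.EditDistance.Defs`). -/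
structure Levenshtein.Cost (α β δ : Type*) where
  delete : α → δ
  insert : β → δ
  substitute : α → β → δ

/-- The default unit cost (ported from the removed Mathlib file). -/
def Levenshtein.defaultCost {α : Type*} [DecidableEq α] : Levenshtein.Cost α α ℕ where
  delete _ := 1
  insert _ := 1
  substitute a b := if a = b then 0 else 1

/-- One step of the Levenshtein dynamic program (ported from the removed Mathlib file). -/
def Levenshtein.impl {α β δ : Type*} [AddZeroClass δ] [Min δ] (C : Levenshtein.Cost α β δ)
    (xs : List α) (y : β) (d : {r : List δ // 0 < r.length}) : {r : List δ // 0 < r.length} :=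
  let ⟨ds, w⟩ := d
  xs.zip (ds.zip ds.tail) |>.foldr
    (init := ⟨[ds.getLast (List.ne_nil_of_length_pos w) + C.insert y], by simp⟩)
    (fun ⟨x, d₀, d₁⟩ ⟨r, w⟩ =>
      ⟨min (C.delete x + r[0]) (min (C.insert y + d₀) (C.substitute x y + d₁)) :: r, by simp⟩)

/-- Levenshtein distances of all suffixes (ported from the removed Mathlib file). -/
def suffixLevenshtein {α β δ : Type*} [AddZeroClass δ] [Min δ] (C : Levenshtein.Cost α β δ)
    (xs : List α) (ys : List β) : {r : List δ // 0 < r.length} :=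
  ys.foldr
    (Levenshtein.impl C xs)
    (xs.foldr (init := ⟨[0], by simp⟩) (fun a ⟨ds, _⟩ => ⟨(C.delete a + ds[0]) :: ds, by simp⟩))

/-- The Levenshtein distance (ported from the removed Mathlib file). -/
def levenshtein {α β δ : Type*} [AddZeroClass δ] [Min δ] (C : Levenshtein.Cost α β δ)
    (xs : List α) (ys : List β) : δ :=
  let ⟨r, w⟩ := suffixLevenshtein C xs ys
  r[0]

/-- Edit distance (Levenshtein distance) with unit costs. -/
def ED {α : Type*} [DecidableEq α] (X Y : List α) : ℕ :=
  levenshtein Levenshtein.defaultCost X Y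

/-- `X` is periodic with period `P`: `X` is a prefix of the infinite repetition of `P`. -/
def PeriodicWith {α : Type*} (X P : List α) : Prop :=
  P ≠ [] ∧ ∀ j, j < X.length → X[j]? = P[j % P.length]?

/-- `X` is `K`-periodic: periodic with some period of length at most `K`. -/
def IsPeriodic {α : Type*} (K : ℕ) (X : List α) : Prop :=
  ∃ P : List α, P.length ≤ K ∧ PeriodicWith X P

/-- `Y` can be partitioned into at most `L` consecutive `K`-periodic substrings. -/
def BPLe {α : Type*} (K L : ℕ) (Y : List α) : Prop :=
  ∃ Ys : List (List α), Ys.flatten = Y ∧ Ys.length ≤ L ∧ ∀ Z ∈ Ys, IsPeriodic K Z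

/-- The `K`-block periodicity of `Y`: the smallest `L` such that `Y` can be partitioned
into `L` consecutive `K`-periodic substrings. -/
noncomputable def bp {α : Type*} (K : ℕ) (Y : List α) : ℕ := sInf {L | BPLe K L Y}

/-- `Y_s = Y[K+s .. |Y|-K+s]`. -/
def shiftSub {α : Type*} (Y : List α) (K : ℕ) (s : ℤ) : List α :=
  listSubZ Y ((K : ℤ) + s) ((Y.length : ℤ) - K + s)

namespace Levenshtein

@[simp] theorem defaultCost_delete {α : Type*} [DecidableEq α] (a : α) :
    (defaultCost : Cost α α ℕ).delete a = 1 := rfl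

@[simp] theorem defaultCost_insert {α : Type*} [DecidableEq α] (a : α) :
    (defaultCost : Cost α α ℕ).insert a = 1 := rfl

@[simp] theorem defaultCost_substitute {α : Type*} [DecidableEq α] (a b : α) :
    (defaultCost : Cost α α ℕ).substitute a b = if a = b then 0 else 1 := rfl

end Levenshtein

section LevPort

variable {α β δ : Type*} [AddZeroClass δ] [Min δ] (C : Levenshtein.Cost α β δ)

theorem impl_tail_eq (x : α) (xs : List α) (y : β) (P Q : {r : List δ // 0 < r.length})
    (h : P.1.tail = Q.1) :
    (Levenshtein.impl C (x :: xs) y P).1.tail = (Levenshtein.impl C xs y Q).1 := by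
  obtain ⟨P, hP⟩ := P
  obtain ⟨Q, hQ⟩ := Q
  simp only at h
  subst h
  cases P with
  | nil => simp at hP
  | cons d Q =>
    cases Q with
    | nil => simp at hQ
    | cons s S => rfl

theorem suffixLevenshtein_tail (x : α) (xs : List α) (ys : List β) :
    (suffixLevenshtein C (x :: xs) ys).1.tail = (suffixLevenshtein C xs ys).1 := by
  induction ys with
  | nil => rfl
  | cons y ys ih => exact impl_tail_eq C x xs y _ _ ih

theorem suffixLevenshtein_cons₁ (x : α) (xs : List α) (ys : List β) :
    (suffixLevenshtein C (x :: xs) ys).1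
      = levenshtein C (x :: xs) ys :: (suffixLevenshtein C xs ys).1 := by
  have e : levenshtein C (x :: xs) ys
      = (suffixLevenshtein C (x :: xs) ys).1[0]'(suffixLevenshtein C (x :: xs) ys).2 := rfl
  rw [e, ← suffixLevenshtein_tail C x xs ys]
  generalize suffixLevenshtein C (x :: xs) ys = Q
  obtain ⟨P, hP⟩ := Q
  cases P with
  | nil => simp at hP
  | cons d P => rfl

theorem levenshtein_cons_cons (x : α) (xs : List α) (y : β) (ys : List β) :
    levenshtein C (x :: xs) (y :: ys) =
      min (C.delete x + levenshtein C xs (y :: ys))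
        (min (C.insert y + levenshtein C (x :: xs) ys)
          (C.substitute x y + levenshtein C xs ys)) := by
  have h1 : suffixLevenshtein C (x :: xs) ys
      = ⟨levenshtein C (x :: xs) ys :: (suffixLevenshtein C xs ys).1, by simp⟩ :=
    Subtype.ext (suffixLevenshtein_cons₁ C x xs ys)
  have e1 : levenshtein C (x :: xs) (y :: ys)
      = (Levenshtein.impl C (x :: xs) y (suffixLevenshtein C (x :: xs) ys)).1[0]'(Levenshtein.impl C (x :: xs) y _).2 := rfl
  have e2 : levenshtein C xs (y :: ys)
      = (Levenshtein.impl C xs y (suffixLevenshtein C xs ys)).1[0]'(Levenshtein.impl C xs y _).2 := rfl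
  have e3 : levenshtein C xs ys
      = (suffixLevenshtein C xs ys).1[0]'(suffixLevenshtein C xs ys).2 := rfl
  rw [e1, e2, e3, h1]
  generalize levenshtein C (x :: xs) ys = L
  generalize suffixLevenshtein C xs ys = Q
  obtain ⟨Q, hQ⟩ := Q
  cases Q with
  | nil => simp at hQ
  | cons s S => rfl

end LevPort

section LevPortNat

variable {α β : Type*} (C : Levenshtein.Cost α β ℕ)

@[simp] theorem levenshtein_nil_nil : levenshtein C [] [] = 0 := rfl

theorem suffixLevenshtein_nil (ys : List β) :
    (suffixLevenshtein C [] ys).1 = [levenshtein C [] ys] := by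
  cases ys with
  | nil => rfl
  | cons y ys =>
    show (Levenshtein.impl C [] y (suffixLevenshtein C [] ys)).1
      = [(Levenshtein.impl C [] y (suffixLevenshtein C [] ys)).1[0]'(Levenshtein.impl C [] y _).2]
    generalize suffixLevenshtein C [] ys = P
    obtain ⟨P, hP⟩ := P
    rfl

@[simp] theorem levenshtein_nil_cons (y : β) (ys : List β) :
    levenshtein C [] (y :: ys) = C.insert y + levenshtein C [] ys := by
  have e : levenshtein C [] (y :: ys)
      = (Levenshtein.impl C [] y (suffixLevenshtein C [] ys)).1[0]'(Levenshtein.impl C [] y _).2 := rfl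
  rw [e]
  have h := suffixLevenshtein_nil C ys
  generalize suffixLevenshtein C [] ys = P at h ⊢
  obtain ⟨P, hP⟩ := P
  simp only at h
  subst h
  show levenshtein C [] ys + C.insert y = _
  exact Nat.add_comm _ _

@[simp] theorem levenshtein_cons_nil (x : α) (xs : List α) :
    levenshtein C (x :: xs) [] = C.delete x + levenshtein C xs [] := rfl

end LevPortNat

set_option linter.unusedSectionVars false
set_option linter.unusedTactic false
set_option linter.unreachableTactic false
set_option maxHeartbeats 1000000

namespace RLRaux

variable {α : Type*} [DecidableEq α]



theorem lev_nil_left (Y : List α) :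
    levenshtein Levenshtein.defaultCost ([] : List α) Y = Y.length := by
  induction Y with
  | nil => simp
  | cons y ys ih => simp [ih, Nat.add_comm]

theorem lev_nil_right (X : List α) :
    levenshtein Levenshtein.defaultCost X ([] : List α) = X.length := by
  induction X with
  | nil => simp
  | cons x xs ih => simp [ih, Nat.add_comm]

theorem lev_self (X : List α) : levenshtein Levenshtein.defaultCost X X = 0 := by
  induction X with
  | nil => simp
  | cons x xs ih =>
    rw [levenshtein_cons_cons]
    refine Nat.le_antisymm (le_trans (min_le_right _ _) (le_trans (min_le_right _ _) ?_)) (Nat.zero_le _)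
    simp [Levenshtein.defaultCost_substitute, ih]

theorem lev_del (x : α) (X Y : List α) :
    levenshtein Levenshtein.defaultCost (x :: X) Y ≤ 1 + levenshtein Levenshtein.defaultCost X Y := by
  cases Y with
  | nil => rw [levenshtein_cons_nil]; simp
  | cons y ys => rw [levenshtein_cons_cons]; exact min_le_left _ _

theorem lev_ins (y : α) (X Y : List α) :
    levenshtein Levenshtein.defaultCost X (y :: Y) ≤ 1 + levenshtein Levenshtein.defaultCost X Y := by
  cases X with
  | nil => rw [levenshtein_nil_cons]; simp
  | cons x xs => rw [levenshtein_cons_cons]; exact le_trans (min_le_right _ _) (min_le_left _ _)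

theorem lev_pre (c : α) (X Y : List α) :
    levenshtein Levenshtein.defaultCost (c :: X) (c :: Y) ≤ levenshtein Levenshtein.defaultCost X Y := by
  rw [levenshtein_cons_cons]
  refine le_trans (min_le_right _ _) (le_trans (min_le_right _ _) ?_)
  simp [Levenshtein.defaultCost_substitute]

theorem lev_prepend (A X Y : List α) :
    levenshtein Levenshtein.defaultCost (A ++ X) Y
      ≤ A.length + levenshtein Levenshtein.defaultCost X Y := by
  induction A with
  | nil => simp
  | cons a A ih =>
    calc levenshtein Levenshtein.defaultCost (a :: (A ++ X)) Y
        ≤ 1 + levenshtein Levenshtein.defaultCost (A ++ X) Y := lev_del _ _ _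
      _ ≤ 1 + (A.length + levenshtein Levenshtein.defaultCost X Y) := by omega
      _ = (a :: A).length + levenshtein Levenshtein.defaultCost X Y := by simp; omega

theorem lev_ins_prepend (A X Y : List α) :
    levenshtein Levenshtein.defaultCost X (A ++ Y)
      ≤ A.length + levenshtein Levenshtein.defaultCost X Y := by
  induction A with
  | nil => simp
  | cons a A ih =>
    calc levenshtein Levenshtein.defaultCost X (a :: (A ++ Y))
        ≤ 1 + levenshtein Levenshtein.defaultCost X (A ++ Y) := lev_ins _ _ _
      _ ≤ 1 + (A.length + levenshtein Levenshtein.defaultCost X Y) := by omega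
      _ = (a :: A).length + levenshtein Levenshtein.defaultCost X Y := by simp; omega

theorem lev_self_append (C B : List α) :
    levenshtein Levenshtein.defaultCost C (C ++ B) ≤ B.length := by
  induction C with
  | nil => simp [lev_nil_left]
  | cons c C ih => exact le_trans (lev_pre c C (C ++ B)) ih

theorem lev_append_self (C B : List α) :
    levenshtein Levenshtein.defaultCost (C ++ B) C ≤ B.length := by
  induction C with
  | nil => simp [lev_nil_right]
  | cons c C ih => exact le_trans (lev_pre c (C ++ B) C) ih

theorem lev_ub1 (A C B : List α) :
    levenshtein Levenshtein.defaultCost (A ++ C) (C ++ B) ≤ A.length + B.length :=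
  le_trans (lev_prepend A C (C ++ B)) (by have := lev_self_append C B; omega)

theorem lev_ub2 (A C B : List α) :
    levenshtein Levenshtein.defaultCost (C ++ B) (A ++ C) ≤ A.length + B.length :=
  le_trans (lev_ins_prepend A (C ++ B) C) (by have := lev_append_self C B; omega)

theorem lev_symm : ∀ (N : ℕ) (X Y : List α), X.length + Y.length ≤ N →
    levenshtein Levenshtein.defaultCost X Y = levenshtein Levenshtein.defaultCost Y X := by
  intro N
  induction N with
  | zero => intro X Y h; rw [List.length_eq_zero_iff.1 (by omega : X.length = 0),
      List.length_eq_zero_iff.1 (by omega : Y.length = 0)]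
  | succ n ih =>
    intro X Y h
    match X, Y with
    | [], Y => rw [lev_nil_left, lev_nil_right]
    | x :: xs, [] => rw [lev_nil_left, lev_nil_right]
    | x :: xs, y :: ys =>
      rw [levenshtein_cons_cons, levenshtein_cons_cons]
      simp only [List.length_cons] at h
      rw [ih xs (y :: ys) (by simp only [List.length_cons]; omega), ih (x :: xs) ys (by simp only [List.length_cons]; omega),
        ih xs ys (by omega)]
      have hsub : (Levenshtein.defaultCost : Levenshtein.Cost α α ℕ).substitute x y
          = Levenshtein.defaultCost.substitute y x := by
        simp [Levenshtein.defaultCost_substitute, eq_comm]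
      rw [hsub]
      exact min_left_comm _ _ _




variable {α : Type*} [DecidableEq α]

/-- Certificate extracted from an edit-distance bound: a list of matched runs
`(i, j, l)` (positions in `X`, `Y`, length), together with delete/insert/substitute
counts. -/
def ROK (X Y : List α) (runs : List (ℕ × ℕ × ℕ)) (dl ins sb : ℕ) : Prop :=
  (∀ r ∈ runs, 1 ≤ r.2.2 ∧ r.1 + r.2.2 ≤ X.length ∧ r.2.1 + r.2.2 ≤ Y.length ∧
      (r.1 : ℤ) - r.2.1 ≤ (dl : ℤ) ∧ (r.2.1 : ℤ) - r.1 ≤ (ins : ℤ) ∧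
      ∀ k, k < r.2.2 → X[r.1 + k]? = Y[r.2.1 + k]?) ∧
  List.IsChain (fun a b => a.1 + a.2.2 ≤ b.1 ∧ a.2.1 + a.2.2 ≤ b.2.1) runs ∧
  X.length = (runs.map (fun r => r.2.2)).sum + dl + sb ∧
  Y.length = (runs.map (fun r => r.2.2)).sum + ins + sb ∧
  runs.length ≤ dl + ins + sb + 1 ∧
  (∀ r, runs.head? = some r → ¬(r.1 = 0 ∧ r.2.1 = 0) → runs.length ≤ dl + ins + sb)

def sh (a b : ℕ) (r : ℕ × ℕ × ℕ) : ℕ × ℕ × ℕ := (r.1 + a, r.2.1 + b, r.2.2)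

theorem sum_map_sh (a b : ℕ) (runs : List (ℕ × ℕ × ℕ)) :
    ((runs.map (sh a b)).map (fun r => r.2.2)).sum = (runs.map (fun r => r.2.2)).sum := by
  rw [List.map_map]; rfl

theorem chain'_sh (a b : ℕ) (runs : List (ℕ × ℕ × ℕ))
    (h : List.IsChain (fun x y => x.1 + x.2.2 ≤ y.1 ∧ x.2.1 + x.2.2 ≤ y.2.1) runs) :
    List.IsChain (fun x y => x.1 + x.2.2 ≤ y.1 ∧ x.2.1 + x.2.2 ≤ y.2.1) (runs.map (sh a b)) := by
  rw [List.isChain_map]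
  exact h.imp (fun hx => by simp only [sh]; omega)

theorem getElem?_cons_shift (x : α) (xs : List α) (i k : ℕ) :
    (x :: xs)[i + 1 + k]? = xs[i + k]? := by
  have : i + 1 + k = (i + k) + 1 := by omega
  rw [this, List.getElem?_cons_succ]

theorem ROK.del {X Y : List α} {runs dl ins sb} (h : ROK X Y runs dl ins sb) (x : α) :
    ROK (x :: X) Y (runs.map (sh 1 0)) (dl + 1) ins sb := by
  obtain ⟨h1, h2, h3, h4, h5, h6⟩ := h
  refine ⟨?_, chain'_sh 1 0 runs h2, ?_, ?_, ?_, ?_⟩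
  · intro r hr
    rw [List.mem_map] at hr
    obtain ⟨r0, hr0, rfl⟩ := hr
    obtain ⟨ha, hb, hc, hd, he, hf⟩ := h1 r0 hr0
    refine ⟨ha, by simp [sh]; omega, by simp [sh]; omega, by simp [sh]; push_cast; omega,
      by simp [sh]; push_cast; omega, ?_⟩
    intro k hk
    simp only [sh]
    rw [getElem?_cons_shift]
    exact hf k hk
  · rw [sum_map_sh]; simp only [List.length_cons]; omega
  · rw [sum_map_sh]; omega
  · simp only [List.length_map]; omega
  · intro r hr _
    simp only [List.length_map]; omega

theorem ROK.ins {X Y : List α} {runs dl ins sb} (h : ROK X Y runs dl ins sb) (y : α) :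
    ROK X (y :: Y) (runs.map (sh 0 1)) dl (ins + 1) sb := by
  obtain ⟨h1, h2, h3, h4, h5, h6⟩ := h
  refine ⟨?_, chain'_sh 0 1 runs h2, ?_, ?_, ?_, ?_⟩
  · intro r hr
    rw [List.mem_map] at hr
    obtain ⟨r0, hr0, rfl⟩ := hr
    obtain ⟨ha, hb, hc, hd, he, hf⟩ := h1 r0 hr0
    refine ⟨ha, by simp [sh]; omega, by simp [sh]; omega, by simp [sh]; push_cast; omega,
      by simp [sh]; push_cast; omega, ?_⟩
    intro k hk
    simp only [sh]
    rw [getElem?_cons_shift]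
    have : r0.1 + 0 + k = r0.1 + k := by omega
    rw [this]
    exact hf k hk
  · rw [sum_map_sh]; omega
  · rw [sum_map_sh]; simp only [List.length_cons]; omega
  · simp only [List.length_map]; omega
  · intro r hr _
    simp only [List.length_map]; omega

theorem ROK.sub {X Y : List α} {runs dl ins sb} (h : ROK X Y runs dl ins sb) (x y : α) :
    ROK (x :: X) (y :: Y) (runs.map (sh 1 1)) dl ins (sb + 1) := by
  obtain ⟨h1, h2, h3, h4, h5, h6⟩ := h
  refine ⟨?_, chain'_sh 1 1 runs h2, ?_, ?_, ?_, ?_⟩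
  · intro r hr
    rw [List.mem_map] at hr
    obtain ⟨r0, hr0, rfl⟩ := hr
    obtain ⟨ha, hb, hc, hd, he, hf⟩ := h1 r0 hr0
    refine ⟨ha, by simp [sh]; omega, by simp [sh]; omega, by simp [sh]; push_cast; omega,
      by simp [sh]; push_cast; omega, ?_⟩
    intro k hk
    simp only [sh]
    rw [getElem?_cons_shift, getElem?_cons_shift]
    exact hf k hk
  · rw [sum_map_sh]; simp only [List.length_cons]; omega
  · rw [sum_map_sh]; simp only [List.length_cons]; omega
  · simp only [List.length_map]; omega
  · intro r hr _
    simp only [List.length_map]; omega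

theorem ROK.match_new {X Y : List α} {runs dl ins sb} (h : ROK X Y runs dl ins sb) (x : α)
    (hh : ∀ r, runs.head? = some r → ¬(r.1 = 0 ∧ r.2.1 = 0)) :
    ROK (x :: X) (x :: Y) ((0, 0, 1) :: runs.map (sh 1 1)) dl ins sb := by
  obtain ⟨h1, h2, h3, h4, h5, h6⟩ := h
  have hlen : runs.length ≤ dl + ins + sb := by
    cases hruns : runs with
    | nil => simp
    | cons r0 rest =>
      exact hruns ▸ h6 r0 (by rw [hruns]; rfl) (hh r0 (by rw [hruns]; rfl)) 
  refine ⟨?_, ?_, ?_, ?_, ?_, ?_⟩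
  · intro r hr
    rcases List.mem_cons.1 hr with rfl | hr
    · refine ⟨le_refl 1, by simp, by simp, by push_cast; omega, by push_cast; omega, ?_⟩
      intro k hk
      interval_cases k
      simp
    · rw [List.mem_map] at hr
      obtain ⟨r0, hr0, rfl⟩ := hr
      obtain ⟨ha, hb, hc, hd, he, hf⟩ := h1 r0 hr0
      refine ⟨ha, by simp [sh]; omega, by simp [sh]; omega, by simp [sh]; push_cast; omega,
        by simp [sh]; push_cast; omega, ?_⟩
      intro k hk
      simp only [sh]
      rw [getElem?_cons_shift, getElem?_cons_shift]
      exact hf k hk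
  · rw [List.isChain_cons]
    refine ⟨?_, chain'_sh 1 1 runs h2⟩
    intro r hr
    rw [List.head?_map] at hr
    cases hruns : runs.head? with
    | none => rw [hruns] at hr; simp at hr
    | some r0 =>
      rw [hruns] at hr
      simp only [Option.map_some] at hr
      cases hr
      exact ⟨by simp [sh], by simp [sh]⟩
  · rw [List.map_cons, List.sum_cons, sum_map_sh]
    simp only [List.length_cons]
    first | omega | (simp; omega)
  · rw [List.map_cons, List.sum_cons, sum_map_sh]
    simp only [List.length_cons]
    first | omega | (simp; omega)
  · simp only [List.length_cons, List.length_map]; omega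
  · intro r hr hcon
    exfalso
    apply hcon
    simp only [List.head?_cons] at hr
    cases hr
    exact ⟨rfl, rfl⟩

theorem ROK.match_ext {X Y : List α} {l : ℕ} {rest : List (ℕ × ℕ × ℕ)} {dl ins sb}
    (h : ROK X Y ((0, 0, l) :: rest) dl ins sb) (x : α) :
    ROK (x :: X) (x :: Y) ((0, 0, l + 1) :: rest.map (sh 1 1)) dl ins sb := by
  obtain ⟨h1, h2, h3, h4, h5, h6⟩ := h
  obtain ⟨ha0, hb0, hc0, hd0, he0, hf0⟩ := h1 (0, 0, l) (List.mem_cons_self)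
  have hb0' : l ≤ X.length := by simpa using hb0
  have hc0' : l ≤ Y.length := by simpa using hc0
  have hf0' : ∀ k, k < l → X[k]? = Y[k]? := by
    intro k hk
    have h' := hf0 k hk
    simpa using h'
  rw [List.isChain_cons] at h2
  obtain ⟨h2a, h2b⟩ := h2
  have hsum3 : X.length = l + (rest.map (fun r => r.2.2)).sum + dl + sb := by
    rw [List.map_cons, List.sum_cons] at h3; simpa using h3
  have hsum4 : Y.length = l + (rest.map (fun r => r.2.2)).sum + ins + sb := by
    rw [List.map_cons, List.sum_cons] at h4; simpa using h4
  refine ⟨?_, ?_, ?_, ?_, ?_, ?_⟩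
  · intro r hr
    rcases List.mem_cons.1 hr with rfl | hr
    · refine ⟨Nat.le_add_left 1 l, by simp; omega, by simp; omega,
        by simp, by simp, ?_⟩
      intro k hk
      have hk' : k < l + 1 := hk
      show (x :: X)[0 + k]? = (x :: Y)[0 + k]?
      rw [Nat.zero_add]
      match k with
      | 0 => simp
      | (k' + 1) =>
        rw [List.getElem?_cons_succ, List.getElem?_cons_succ]
        exact hf0' k' (by omega)
    · rw [List.mem_map] at hr
      obtain ⟨r0, hr0, rfl⟩ := hr
      obtain ⟨ha, hb, hc, hd, he, hf⟩ := h1 r0 (List.mem_cons_of_mem _ hr0)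
      refine ⟨ha, by simp [sh]; omega, by simp [sh]; omega, by simp [sh]; push_cast; omega,
        by simp [sh]; push_cast; omega, ?_⟩
      intro k hk
      simp only [sh]
      rw [getElem?_cons_shift, getElem?_cons_shift]
      exact hf k hk
  · rw [List.isChain_cons]
    refine ⟨?_, chain'_sh 1 1 rest h2b⟩
    intro r hr
    rw [List.head?_map] at hr
    cases hrest : rest.head? with
    | none => rw [hrest] at hr; simp at hr
    | some r0 =>
      rw [hrest] at hr
      simp only [Option.map_some] at hr
      cases hr
      have ht := h2a r0 hrest
      simp [sh] at ht ⊢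
      omega
  · rw [List.map_cons, List.sum_cons, sum_map_sh]
    simp only [List.length_cons]
    first | omega | (simp; omega)
  · rw [List.map_cons, List.sum_cons, sum_map_sh]
    simp only [List.length_cons]
    first | omega | (simp; omega)
  · simp only [List.length_cons, List.length_map] at h5 ⊢; omega
  · intro r hr hcon
    exfalso
    apply hcon
    simp only [List.head?_cons] at hr
    cases hr
    exact ⟨rfl, rfl⟩

theorem extract : ∀ (N : ℕ) (X Y : List α), X.length + Y.length ≤ N →
    ∀ c : ℕ, levenshtein Levenshtein.defaultCost X Y ≤ c →
    ∃ runs dl ins sb, dl + ins + sb ≤ c ∧ ROK X Y runs dl ins sb := by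
  intro N
  induction N with
  | zero =>
    intro X Y h c hc
    rw [List.length_eq_zero_iff.1 (by omega : X.length = 0),
      List.length_eq_zero_iff.1 (by omega : Y.length = 0)]
    exact ⟨[], 0, 0, 0, by omega, by simp [ROK]⟩
  | succ n ih =>
    intro X Y hN c hc
    match X, Y with
    | [], Y =>
      rw [lev_nil_left] at hc
      exact ⟨[], 0, Y.length, 0, by omega, by simp [ROK]⟩
    | x :: xs, [] =>
      rw [lev_nil_right] at hc
      exact ⟨[], (x :: xs).length, 0, 0, by omega, by simp [ROK]⟩
    | x :: xs, y :: ys =>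
      rw [levenshtein_cons_cons] at hc
      simp only [List.length_cons] at hN
      rcases min_le_iff.1 hc with hbr | hc2
      · -- delete branch
        have hcost : (Levenshtein.defaultCost : Levenshtein.Cost α α ℕ).delete x = 1 := rfl
        rw [hcost] at hbr
        have hrec : levenshtein Levenshtein.defaultCost xs (y :: ys) ≤ c - 1 := by omega
        obtain ⟨runs, dl, ins, sb, hle, hR⟩ := ih xs (y :: ys)
          (by simp only [List.length_cons]; omega) (c - 1) hrec
        exact ⟨_, _, _, _, by omega, hR.del x⟩
      rcases min_le_iff.1 hc2 with hbr | hbr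
      · -- insert branch
        have hcost : (Levenshtein.defaultCost : Levenshtein.Cost α α ℕ).insert y = 1 := rfl
        rw [hcost] at hbr
        have hrec : levenshtein Levenshtein.defaultCost (x :: xs) ys ≤ c - 1 := by omega
        obtain ⟨runs, dl, ins, sb, hle, hR⟩ := ih (x :: xs) ys
          (by simp only [List.length_cons]; omega) (c - 1) hrec
        exact ⟨_, _, _, _, by omega, hR.ins y⟩
      · -- substitute branch
        by_cases hxy : x = y
        · subst hxy
          have hcost : (Levenshtein.defaultCost : Levenshtein.Cost α α ℕ).substitute x x = 0 := by
            simp [Levenshtein.defaultCost_substitute]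
          rw [hcost, Nat.zero_add] at hbr
          obtain ⟨runs, dl, ins, sb, hle, hR⟩ := ih xs ys (by omega) c hbr
          by_cases hhead : ∃ rest l, runs = (0, 0, l) :: rest
          · obtain ⟨rest, l, rfl⟩ := hhead
            exact ⟨_, _, _, _, hle, hR.match_ext x⟩
          · refine ⟨_, _, _, _, hle, hR.match_new x ?_⟩
            intro r hr hcon
            apply hhead
            obtain ⟨e1, e2⟩ := hcon
            cases runs with
            | nil => simp at hr
            | cons r0 rest =>
              obtain ⟨ra, rb, rc⟩ := r0
              simp only [List.head?_cons, Option.some.injEq] at hr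
              subst hr
              simp only at e1 e2
              subst e1
              subst e2
              exact ⟨rest, rc, rfl⟩
        · have hcost : (Levenshtein.defaultCost : Levenshtein.Cost α α ℕ).substitute x y = 1 := by
            simp [Levenshtein.defaultCost_substitute, hxy]
          rw [hcost] at hbr
          have hrec : levenshtein Levenshtein.defaultCost xs ys ≤ c - 1 := by omega
          obtain ⟨runs, dl, ins, sb, hle, hR⟩ := ih xs ys (by omega) (c - 1) hrec
          exact ⟨_, _, _, _, by omega, hR.sub x y⟩




theorem lt_of_getElem?_eq {Y : List α} {i j : ℕ} (hi : i < Y.length) (h : Y[i]? = Y[j]?) :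
    j < Y.length := by
  by_contra hc
  rw [List.getElem?_eq_none (show Y.length ≤ j by omega), List.getElem?_eq_getElem hi] at h
  simp at h

theorem listSub_length (Y : List α) (i j : ℕ) (hij : i ≤ j) (hj : j ≤ Y.length) :
    (listSub Y i j).length = j - i := by
  simp [listSub]
  omega

theorem listSub_getElem? (Y : List α) (i j k : ℕ) (h : i + k < j) :
    (listSub Y i j)[k]? = Y[i + k]? := by
  unfold listSub
  rw [List.getElem?_drop, List.getElem?_take]
  rw [if_pos h]

theorem listSub_split (Y : List α) (a b c : ℕ) (hab : a ≤ b) (hbc : b ≤ c)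
    (hc : c ≤ Y.length) : listSub Y a c = listSub Y a b ++ listSub Y b c := by
  unfold listSub
  have h1 : Y.take b = (Y.take c).take b := by
    rw [List.take_take, min_eq_left hbc]
  rw [h1]
  conv_lhs => rw [← List.take_append_drop b (Y.take c)]
  rw [List.drop_append]
  congr 1
  have : ((Y.take c).take b).length = b := by
    simp
    omega
  rw [this, Nat.sub_eq_zero_of_le hab, List.drop_zero]

theorem take_split (Y : List α) (a b : ℕ) (hab : a ≤ b) :
    Y.take b = Y.take a ++ listSub Y a b := by
  unfold listSub
  have h1 : Y.take a = (Y.take b).take a := by rw [List.take_take, min_eq_left hab]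
  rw [h1, List.take_append_drop]

theorem whole_split (Y : List α) (a b : ℕ) (hab : a ≤ b) :
    Y = Y.take a ++ listSub Y a b ++ Y.drop b := by
  rw [← take_split Y a b hab, List.take_append_drop]

theorem isPeriodic_self (K4 : ℕ) (W : List α) (hne : W ≠ []) (hlen : W.length ≤ K4) :
    IsPeriodic K4 W := by
  refine ⟨W, hlen, hne, ?_⟩
  intro j hj
  rw [Nat.mod_eq_of_lt hj]

theorem singletons (K4 : ℕ) (hK : 1 ≤ K4) (Z : List α) :
    ∃ Ys : List (List α), Ys.flatten = Z ∧ Ys.length = Z.length ∧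
      ∀ W ∈ Ys, IsPeriodic K4 W := by
  refine ⟨Z.map (fun c => [c]), ?_, by simp, ?_⟩
  · induction Z with
    | nil => simp
    | cons z zs ih => simp [ih]
  · intro W hW
    rw [List.mem_map] at hW
    obtain ⟨c, _, rfl⟩ := hW
    exact isPeriodic_self K4 [c] (by simp) (by simpa using hK)

theorem periodic_block (Y : List α) (p t l : ℕ) (ht : 1 ≤ t) (hl : 1 ≤ l)
    (hbound : p + l ≤ Y.length)
    (hmatch : ∀ k, k < l → Y[p + k]? = Y[p + k + t]?) :
    PeriodicWith (listSub Y p (p + l)) (listSub Y p (p + t)) := by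
  have hpt : p + t < Y.length := by
    have h0 := hmatch 0 hl
    rw [Nat.add_zero] at h0
    exact lt_of_getElem?_eq (by omega) h0
  have hPlen : (listSub Y p (p + t)).length = t := by
    have := listSub_length Y p (p + t) (by omega) (by omega)
    omega
  have hBlen : (listSub Y p (p + l)).length = l := by
    have := listSub_length Y p (p + l) (by omega) (by omega)
    omega
  have key : ∀ j, j < l → Y[p + j]? = Y[p + j % t]? := by
    intro j
    induction j using Nat.strong_induction_on with
    | _ j ihj =>
      intro hj
      by_cases hjt : j < t
      · rw [Nat.mod_eq_of_lt hjt]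
      · have htj : t ≤ j := by omega
        have hstep := hmatch (j - t) (by omega)
        have e1 : p + (j - t) + t = p + j := by omega
        rw [e1] at hstep
        rw [← hstep]
        have e2 : j % t = (j - t) % t := by
          rw [Nat.mod_eq_sub_mod htj]
        rw [e2]
        exact ihj (j - t) (by omega) (by omega)
  refine ⟨by intro h; rw [← List.length_eq_zero_iff] at *; omega, ?_⟩
  intro j hj
  rw [hBlen] at hj
  rw [hPlen]
  rw [listSub_getElem? Y p (p + l) j (by omega),
    listSub_getElem? Y p (p + t) (j % t) (by have := Nat.mod_lt j (show 0 < t by omega); omega)]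
  exact key j hj

theorem cov (K4 : ℕ) (hK4 : 1 ≤ K4) (Y : List α) (w1 : ℕ) (hw1 : w1 ≤ Y.length) :
    ∀ (n : ℕ) (q : List (ℕ × ℕ × ℕ)) (a : ℕ), q.length + (w1 - a) ≤ n → a ≤ w1 →
    (∀ r ∈ q, a ≤ r.1 ∧ r.1 + r.2.2 ≤ w1 ∧ 1 ≤ r.2.1 ∧ r.2.1 ≤ K4 ∧ 1 ≤ r.2.2 ∧
       ∀ k, k < r.2.2 → Y[r.1 + k]? = Y[r.1 + k + r.2.1]?) →
    q.Pairwise (fun r r' => r.1 + r.2.2 ≤ r'.1) →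
    ∃ Ys : List (List α), Ys.flatten = listSub Y a w1 ∧
      Ys.length + (q.map (fun r => r.2.2)).sum ≤ (w1 - a) + q.length ∧
      ∀ Z ∈ Ys, IsPeriodic K4 Z := by
  intro n
  induction n with
  | zero =>
    intro q a hn ha hq hpw
    match q with
    | [] =>
      obtain ⟨Ys, h1, h2, h3⟩ := singletons K4 hK4 (listSub Y a w1)
      refine ⟨Ys, h1, ?_, h3⟩
      rw [h2, listSub_length Y a w1 ha hw1]
      simp
    | r :: q' => simp at hn
  | succ m ih =>
    intro q a hn ha hq hpw
    match q with
    | [] =>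
      obtain ⟨Ys, h1, h2, h3⟩ := singletons K4 hK4 (listSub Y a w1)
      refine ⟨Ys, h1, ?_, h3⟩
      rw [h2, listSub_length Y a w1 ha hw1]
      simp
    | ⟨p, t, l⟩ :: q' =>
      obtain ⟨hap, hplw, ht1, htK, hl1, hm⟩ := hq ⟨p, t, l⟩ (List.mem_cons_self)
      simp only at hap hplw ht1 htK hl1 hm
      rw [List.pairwise_cons] at hpw
      obtain ⟨hpw1, hpw2⟩ := hpw
      by_cases hcase : a < p
      · -- peel one singleton at a
        have ha1 : a + 1 ≤ w1 := by omega
        obtain ⟨Ys', h1, h2, h3⟩ := ih (⟨p, t, l⟩ :: q') (a + 1)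
          (by simp only [List.length_cons] at hn ⊢; omega) ha1 (by
            intro r hr
            obtain ⟨c1, c2, c3, c4, c5, c6⟩ := hq r hr
            rcases List.mem_cons.1 hr with rfl | hr'
            · simp only at c1 ⊢
              exact ⟨by omega, c2, c3, c4, c5, c6⟩
            · refine ⟨?_, c2, c3, c4, c5, c6⟩
              have h' : p + l ≤ r.1 := hpw1 r hr'
              omega) (List.pairwise_cons.2 ⟨hpw1, hpw2⟩)
        have hsplit : listSub Y a w1 = listSub Y a (a + 1) ++ listSub Y (a + 1) w1 :=
          listSub_split Y a (a + 1) w1 (by omega) ha1 hw1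
        refine ⟨listSub Y a (a + 1) :: Ys', ?_, ?_, ?_⟩
        · simp [h1, hsplit]
        · simp only [List.length_cons]
          simp at h2 ⊢
          omega
        · intro Z hZ
          rcases List.mem_cons.1 hZ with rfl | hZ'
          · have hlen1 : (listSub Y a (a + 1)).length = 1 := by
              have := listSub_length Y a (a + 1) (by omega) (by omega)
              omega
            refine isPeriodic_self K4 _ ?_ (by omega)
            intro hc
            rw [hc] at hlen1
            simp at hlen1
          · exact h3 Z hZ'
      · -- a = p : peel the periodic block
        have hap' : a = p := by omega
        subst hap'
        obtain ⟨Ys', h1, h2, h3⟩ := ih q' (a + l)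
          (by simp only [List.length_cons] at hn ⊢; omega) (by omega) (by
            intro r hr
            obtain ⟨c1, c2, c3, c4, c5, c6⟩ := hq r (List.mem_cons_of_mem _ hr)
            have h' : a + l ≤ r.1 := hpw1 r hr
            exact ⟨by omega, c2, c3, c4, c5, c6⟩) hpw2
        have hsplit : listSub Y a w1 = listSub Y a (a + l) ++ listSub Y (a + l) w1 :=
          listSub_split Y a (a + l) w1 (by omega) (by omega) hw1
        refine ⟨listSub Y a (a + l) :: Ys', ?_, ?_, ?_⟩
        · simp [h1, hsplit]
        · simp only [List.length_cons]
          simp at h2 ⊢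
          omega
        · intro Z hZ
          rcases List.mem_cons.1 hZ with rfl | hZ'
          · refine ⟨listSub Y a (a + t), ?_, periodic_block Y a t l ht1 hl1 (by omega) hm⟩
            have hYat : a + t ≤ Y.length := by
              have h0 := hm 0 hl1
              rw [Nat.add_zero] at h0
              have := lt_of_getElem?_eq (show a < Y.length by omega) h0
              omega
            have := listSub_length Y a (a + t) (by omega) hYat
            omega
          · exact h3 Z hZ'



theorem bp_le_of_BPLe {K L : ℕ} {Y : List α} (h : BPLe K L Y) : bp K Y ≤ L :=
  Nat.sInf_le h

theorem shiftSub_eq (Y : List α) (K : ℕ) (s : ℤ) (hs : -(K : ℤ) ≤ s) (h2K : 2 * K ≤ Y.length) :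
    shiftSub Y K s = listSub Y (((K : ℤ) + s).toNat)
      ((Y.length - 2 * K) + ((K : ℤ) + s).toNat) := by
  unfold shiftSub listSubZ
  have e : ((Y.length : ℤ) - K + s).toNat = (Y.length - 2 * K) + ((K : ℤ) + s).toNat := by
    omega
  rw [e]

theorem bp_le_length (K4 : ℕ) (hK4 : 1 ≤ K4) (Y : List α) : bp K4 Y ≤ Y.length := by
  obtain ⟨Ys, h1, h2, h3⟩ := singletons K4 hK4 Y
  exact bp_le_of_BPLe ⟨Ys, h1, le_of_eq h2, h3⟩

theorem key_eq (Y : List α) (K : ℕ) (hbp : 10 * K < bp (4 * K) Y) (hK : 1 ≤ K)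
    (hY : 10 * K < Y.length) (u v n0 : ℕ) (hn0 : n0 + 2 * K = Y.length)
    (hu : u ≤ 2 * K) (hv : v ≤ 2 * K) (huv : u < v) :
    levenshtein Levenshtein.defaultCost (listSub Y u (n0 + u)) (listSub Y v (n0 + v))
      = 2 * (v - u) := by
  have hK4 : 1 ≤ 4 * K := by omega
  have hd2K : v - u ≤ 2 * K := by omega
  have hn0big : 8 * K < n0 := by omega
  -- upper bound
  have hXsplit : listSub Y u (n0 + u) = listSub Y u v ++ listSub Y v (n0 + u) :=
    listSub_split Y u v (n0 + u) (by omega) (by omega) (by omega)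
  have hX'split : listSub Y v (n0 + v) = listSub Y v (n0 + u) ++ listSub Y (n0 + u) (n0 + v) :=
    listSub_split Y v (n0 + u) (n0 + v) (by omega) (by omega) (by omega)
  have hAlen : (listSub Y u v).length = v - u := by
    have := listSub_length Y u v (by omega) (by omega); omega
  have hBlen : (listSub Y (n0 + u) (n0 + v)).length = v - u := by
    have := listSub_length Y (n0 + u) (n0 + v) (by omega) (by omega); omega
  have hupper : levenshtein Levenshtein.defaultCost (listSub Y u (n0 + u))
      (listSub Y v (n0 + v)) ≤ 2 * (v - u) := by
    rw [hXsplit, hX'split]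
    have := lev_ub1 (listSub Y u v) (listSub Y v (n0 + u)) (listSub Y (n0 + u) (n0 + v))
    omega
  -- lower bound via contradiction
  by_contra hne
  have hED : levenshtein Levenshtein.defaultCost (listSub Y u (n0 + u))
      (listSub Y v (n0 + v)) ≤ 2 * (v - u) - 1 := by omega
  clear hne hupper hXsplit hX'split hAlen hBlen
  set X := listSub Y u (n0 + u) with hXdef
  set X' := listSub Y v (n0 + v) with hX'def
  have hXlen : X.length = n0 := by
    rw [hXdef]
    have := listSub_length Y u (n0 + u) (by omega) (by omega); omega
  have hX'len : X'.length = n0 := by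
    rw [hX'def]
    have := listSub_length Y v (n0 + v) (by omega) (by omega); omega
  obtain ⟨runs, dl, ins, sb, hsum, h1, h2, h3, h4, h5, h6⟩ :=
    extract (X.length + X'.length) X X' le_rfl (2 * (v - u) - 1) hED
  rw [hXlen] at h3
  rw [hX'len] at h4
  have hdlins : dl = ins := by omega
  have hdl : dl ≤ (v - u) - 1 := by omega
  -- the mapped run list in Y-coordinates
  set f : ℕ × ℕ × ℕ → ℕ × ℕ × ℕ :=
    fun r => (u + r.1, (v + r.2.1) - (u + r.1), r.2.2) with hfdef
  have hfsum : ((runs.map f).map (fun r => r.2.2)).sum = (runs.map (fun r => r.2.2)).sum := by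
    rw [List.map_map]; rfl
  have hrunfacts : ∀ r0 ∈ runs, 1 ≤ r0.2.2 ∧ r0.1 + r0.2.2 ≤ n0 ∧ r0.2.1 + r0.2.2 ≤ n0 ∧
      u + r0.1 < v + r0.2.1 ∧ (v + r0.2.1) - (u + r0.1) ≤ 4 * K := by
    intro r0 hr0
    obtain ⟨c1, c2, c3, c4, c5, _⟩ := h1 r0 hr0
    rw [hXlen] at c2
    rw [hX'len] at c3
    refine ⟨c1, c2, c3, by omega, by omega⟩
  have hcovq : ∀ r ∈ runs.map f, u ≤ r.1 ∧ r.1 + r.2.2 ≤ n0 + u ∧ 1 ≤ r.2.1 ∧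
      r.2.1 ≤ 4 * K ∧ 1 ≤ r.2.2 ∧
      ∀ k, k < r.2.2 → Y[r.1 + k]? = Y[r.1 + k + r.2.1]? := by
    intro r hr
    obtain ⟨r0, hr0, rfl⟩ := List.mem_map.1 hr
    obtain ⟨i, j, l⟩ := r0
    obtain ⟨c1, c2, c3, c4, c5⟩ := hrunfacts (i, j, l) hr0
    obtain ⟨_, _, _, _, _, c6⟩ := h1 (i, j, l) hr0
    simp only at c1 c2 c3 c4 c5 c6
    simp only [hfdef]
    refine ⟨by omega, by omega, by omega, by omega, by omega, ?_⟩
    intro k hk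
    have e1 : u + i + k + (v + j - (u + i)) = v + (j + k) := by omega
    rw [e1]
    have e2 : Y[u + i + k]? = X[i + k]? := by
      have h' := listSub_getElem? Y u (n0 + u) (i + k) (by omega)
      rw [← hXdef] at h'
      have eidx : u + (i + k) = u + i + k := by omega
      rw [h', eidx]
    have e3 : X'[j + k]? = Y[v + (j + k)]? := by
      have h' := listSub_getElem? Y v (n0 + v) (j + k) (by omega)
      rw [← hX'def] at h'
      rw [h']
    rw [e2, ← e3]
    exact c6 k hk
  have hpairwise : (runs.map f).Pairwise (fun r r' => r.1 + r.2.2 ≤ r'.1) := by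
    haveI : IsTrans (ℕ × ℕ × ℕ)
        (fun a b => a.1 + a.2.2 ≤ b.1 ∧ a.2.1 + a.2.2 ≤ b.2.1) := by
      constructor
      intro a b c hab hbc
      obtain ⟨h1', h2'⟩ := hab
      obtain ⟨h3', h4'⟩ := hbc
      exact ⟨by omega, by omega⟩
    have hpw := List.isChain_iff_pairwise.1 h2
    rw [List.pairwise_map]
    exact hpw.imp (by
      intro a b hab
      obtain ⟨h1', _⟩ := hab
      simp only [hfdef]
      omega)
  obtain ⟨Ysw, hw1, hw2, hw3⟩ := cov (4 * K) hK4 Y (n0 + u) (by omega)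
    ((runs.map f).length + (n0 + u - u)) (runs.map f) u le_rfl (by omega) hcovq hpairwise
  rw [hfsum] at hw2
  have hwinlen : Ysw.length ≤ 8 * K - 1 := by
    simp only [List.length_map] at hw2
    omega
  -- prefix and suffix singleton decompositions
  obtain ⟨Pre, hp1, hp2, hp3⟩ := singletons (4 * K) hK4 (Y.take u)
  obtain ⟨Suf, hq1, hq2, hq3⟩ := singletons (4 * K) hK4 (Y.drop (n0 + u))
  have hPreLen : Pre.length = u := by
    rw [hp2, List.length_take]
    omega
  have hSufLen : Suf.length = 2 * K - u := by
    rw [hq2, List.length_drop]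
    omega
  have hbple : BPLe (4 * K) (10 * K) Y := by
    refine ⟨Pre ++ Ysw ++ Suf, ?_, ?_, ?_⟩
    · rw [List.flatten_append, List.flatten_append, hp1, hw1, hq1]
      exact (whole_split Y u (n0 + u) (by omega)).symm
    · simp only [List.length_append]
      omega
    · intro Z hZ
      rcases List.mem_append.1 hZ with hZ' | hZs
      · rcases List.mem_append.1 hZ' with hZp | hZw
        · exact hp3 Z hZp
        · exact hw3 Z hZw
      · exact hq3 Z hZs
  have := bp_le_of_BPLe hbple
  omega

end RLRaux

/-- Random-like rule: if `bp_{4K}(Y) > 10K`, then for all shifts `s, s' ∈ {-K, ..., K}`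
we have `ED(Y_s, Y_{s'}) = 2·|s - s'|`. -/
theorem random_like_rule {α : Type*} [DecidableEq α]
    (Y : List α) (K : ℕ) (hbp : 10 * K < bp (4 * K) Y)
    (s s' : ℤ) (hs1 : -(K : ℤ) ≤ s) (hs2 : s ≤ K) (hs'1 : -(K : ℤ) ≤ s') (hs'2 : s' ≤ K) :
    ED (shiftSub Y K s) (shiftSub Y K s') = 2 * (s - s').natAbs := by
  by_cases hss : s = s'
  · subst hss
    simp [ED, RLRaux.lev_self]
  have hK : 1 ≤ K := by
    rcases Nat.eq_zero_or_pos K with h0 | h1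
    · exfalso; apply hss; omega
    · exact h1
  have hY : 10 * K < Y.length := by
    have := RLRaux.bp_le_length (4 * K) (by omega) Y
    omega
  have h2K : 2 * K ≤ Y.length := by omega
  set n0 : ℕ := Y.length - 2 * K with hn0def
  have hn0 : n0 + 2 * K = Y.length := by omega
  set u : ℕ := ((K : ℤ) + s).toNat with hudef
  set v : ℕ := ((K : ℤ) + s').toNat with hvdef
  have hu' : (u : ℤ) = (K : ℤ) + s := by omega
  have hv' : (v : ℤ) = (K : ℤ) + s' := by omega
  have hu2K : u ≤ 2 * K := by omega
  have hv2K : v ≤ 2 * K := by omega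
  rw [ED, RLRaux.shiftSub_eq Y K s hs1 h2K, RLRaux.shiftSub_eq Y K s' hs'1 h2K, ← hudef, ← hvdef,
    ← hn0def]
  rcases lt_trichotomy u v with huv | huv | huv
  · rw [RLRaux.key_eq Y K hbp hK hY u v n0 hn0 hu2K hv2K huv]
    have : (s - s').natAbs = v - u := by omega
    omega
  · exfalso; apply hss; omega
  · rw [RLRaux.lev_symm ((listSub Y u (n0 + u)).length + (listSub Y v (n0 + v)).length)
      (listSub Y u (n0 + u)) (listSub Y v (n0 + v)) le_rfl]
    rw [RLRaux.key_eq Y K hbp hK hY v u n0 hn0 hv2K hu2K huv]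
    have : (s - s').natAbs = u - v := by omega
    omega
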